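/- Let d ≥ 2 and n ≥ 2 be integers and N = n^d. Define η : ℝ^d → ℝ^d by η(x)_j = x_j for j = 1,…,d−1 and η(x)_d = x_d + ∑_{j=1}^{d−1} n^{−j}·max(0, x_j). Then: (i) η is a bijection, with inverse given by η^{−1}(y)_j = y_j for j < d and η^{−1}(y)_d = y_d − ∑_{j=1}^{d−1} n^{−j}·max(0, y_j); (ii) both η and η^{−1} are Lipschitz with constant n/(n−1) in the Euclidean norm; (iii) for the grid points x^α = α/n, α ∈ {0,…,n−1}^d, the set of values {η(x^α)_d} equals {i/N : i = 0,…,N−1}, so these values are pairwise distinct with minimal pairwise distance exactly N^{−1}. -/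

import Mathlib

open scoped NNReal

/-- The uniform grid point `x^α = α/n` of `[0,1]^d`. -/
noncomputable def gridPoint (d n : ℕ) (α : Fin d → Fin n) : EuclideanSpace ℝ (Fin d) :=
  WithLp.toLp 2 fun i => (α i : ℝ) / n

/-! ### Auxiliary lemmas -/

lemma euclid_coord_le {d : ℕ} (x : EuclideanSpace ℝ (Fin d)) (i : Fin d) : |x i| ≤ ‖x‖ := by
  rw [EuclideanSpace.norm_eq]
  rw [show |x i| = Real.sqrt (‖x i‖ ^ 2) by
    rw [Real.sqrt_sq_eq_abs, Real.norm_eq_abs, abs_abs]]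
  apply Real.sqrt_le_sqrt
  exact Finset.single_le_sum (f := fun j => ‖x j‖ ^ 2)
    (fun j _ => sq_nonneg _) (Finset.mem_univ i)

lemma geo_bound (n : ℕ) (hn : 2 ≤ n) (m : ℕ) :
    ∑ k ∈ Finset.range m, ((n : ℝ)) ^ (-(k : ℤ) - 1) ≤ 1 / ((n : ℝ) - 1) := by
  have hn2 : (2 : ℝ) ≤ (n : ℝ) := by exact_mod_cast hn
  have hn0 : (n : ℝ) ≠ 0 := by linarith
  have hr1 : (n : ℝ)⁻¹ < 1 := by
    rw [inv_lt_one_iff₀]; right; linarith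
  have hr0 : (0 : ℝ) ≤ (n : ℝ)⁻¹ := by positivity
  have key : ∀ k : ℕ, (n : ℝ) ^ (-(k : ℤ) - 1) = ((n : ℝ)⁻¹) ^ k * (n : ℝ)⁻¹ := by
    intro k
    rw [show -(k : ℤ) - 1 = -(k + 1 : ℕ) by push_cast; ring, zpow_neg, zpow_natCast,
      pow_succ, mul_inv, inv_pow]
  simp_rw [key, ← Finset.sum_mul]
  have hs : ∑ k ∈ Finset.range m, ((n : ℝ)⁻¹) ^ k ≤ 1 / (1 - (n : ℝ)⁻¹) := by
    rw [geom_sum_eq (by linarith)]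
    have h1 : (0:ℝ) < 1 - (n : ℝ)⁻¹ := by linarith
    have h2 : (0:ℝ) ≤ ((n:ℝ)⁻¹) ^ m := by positivity
    rw [show ((n:ℝ)⁻¹ ^ m - 1) / ((n:ℝ)⁻¹ - 1) = (1 - (n:ℝ)⁻¹ ^ m) / (1 - (n:ℝ)⁻¹) by
      rw [← neg_div_neg_eq]; ring_nf]
    gcongr
    linarith
  have h1 : (0:ℝ) < 1 - (n : ℝ)⁻¹ := by linarith
  calc (∑ k ∈ Finset.range m, ((n : ℝ)⁻¹) ^ k) * (n:ℝ)⁻¹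
      ≤ (1 / (1 - (n : ℝ)⁻¹)) * (n:ℝ)⁻¹ := by
        apply mul_le_mul_of_nonneg_right hs hr0
    _ = 1 / ((n : ℝ) - 1) := by
        field_simp

/-- The perturbation sum appearing in the last coordinate of the coupling layer. -/
noncomputable def etaSum (d n : ℕ) (x : EuclideanSpace ℝ (Fin d)) : ℝ :=
  ∑ k : Fin d, (if (k : ℕ) < d - 1 then (n : ℝ) ^ (-((k : ℕ) : ℤ) - 1) * max 0 (x k) else 0)

lemma coeff_sum_le {d n : ℕ} (hn : 2 ≤ n) :
    ∑ k : Fin d, (if (k : ℕ) < d - 1 then (n : ℝ) ^ (-((k : ℕ) : ℤ) - 1) else 0)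
      ≤ 1 / ((n : ℝ) - 1) := by
  rw [Fin.sum_univ_eq_sum_range (fun k => if k < d - 1 then (n : ℝ) ^ (-(k : ℤ) - 1) else 0) d]
  rw [← Finset.sum_filter]
  have hfil : (Finset.range d).filter (fun k => k < d - 1) = Finset.range (d - 1) := by
    ext k; simp; omega
  rw [hfil]
  exact geo_bound n hn (d - 1)

lemma etaSum_diff_le {d n : ℕ} (hn : 2 ≤ n) (x y : EuclideanSpace ℝ (Fin d)) :
    |etaSum d n x - etaSum d n y| ≤ (1 / ((n : ℝ) - 1)) * ‖x - y‖ := by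
  unfold etaSum
  rw [← Finset.sum_sub_distrib]
  calc |∑ k : Fin d, ((if (k : ℕ) < d - 1 then (n : ℝ) ^ (-((k : ℕ) : ℤ) - 1) * max 0 (x k) else 0)
          - (if (k : ℕ) < d - 1 then (n : ℝ) ^ (-((k : ℕ) : ℤ) - 1) * max 0 (y k) else 0))|
      ≤ ∑ k : Fin d, |(if (k : ℕ) < d - 1 then (n : ℝ) ^ (-((k : ℕ) : ℤ) - 1) * max 0 (x k) else 0)
          - (if (k : ℕ) < d - 1 then (n : ℝ) ^ (-((k : ℕ) : ℤ) - 1) * max 0 (y k) else 0)| :=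
        Finset.abs_sum_le_sum_abs _ _
    _ ≤ ∑ k : Fin d, (if (k : ℕ) < d - 1 then (n : ℝ) ^ (-((k : ℕ) : ℤ) - 1) else 0) * ‖x - y‖ := by
        apply Finset.sum_le_sum; intro k _
        by_cases h : (k : ℕ) < d - 1
        · simp only [h, if_true]
          rw [← mul_sub, abs_mul]
          have hz : (0:ℝ) ≤ (n : ℝ) ^ (-((k : ℕ) : ℤ) - 1) := by positivity
          rw [abs_of_nonneg hz]
          apply mul_le_mul_of_nonneg_left _ hz
          calc |max 0 (x k) - max 0 (y k)|
              = |max (x k) 0 - max (y k) 0| := by rw [max_comm (0:ℝ) (x k), max_comm (0:ℝ) (y k)]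
            _ ≤ |x k - y k| := abs_max_sub_max_le_abs _ _ _
            _ = |(x - y) k| := by norm_num
            _ ≤ ‖x - y‖ := euclid_coord_le _ _
        · simp [h]
    _ = (∑ k : Fin d, (if (k : ℕ) < d - 1 then (n : ℝ) ^ (-((k : ℕ) : ℤ) - 1) else 0)) * ‖x - y‖ :=
        (Finset.sum_mul _ _ _).symm
    _ ≤ (1 / ((n : ℝ) - 1)) * ‖x - y‖ :=
        mul_le_mul_of_nonneg_right (coeff_sum_le hn) (norm_nonneg _)

lemma coupling_lip {d n : ℕ} (hd : 2 ≤ d) (hn : 2 ≤ n) (ε : ℝ) (hε : |ε| ≤ 1)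
    (f : EuclideanSpace ℝ (Fin d) → EuclideanSpace ℝ (Fin d))
    (hf : ∀ x j, f x j = x j + (if (j : ℕ) = d - 1 then ε * etaSum d n x else 0)) :
    LipschitzWith (Real.toNNReal ((n : ℝ) / ((n : ℝ) - 1))) f := by
  have hn2 : (2 : ℝ) ≤ (n : ℝ) := by exact_mod_cast hn
  have hpos : (0:ℝ) < (n : ℝ) - 1 := by linarith
  apply LipschitzWith.of_dist_le_mul
  intro x y
  rw [dist_eq_norm, dist_eq_norm,
    Real.coe_toNNReal _ (by positivity : (0:ℝ) ≤ (n : ℝ) / ((n : ℝ) - 1))]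
  set jD : Fin d := ⟨d - 1, by omega⟩ with hjD
  have key : f x - f y = (x - y) +
      (ε * (etaSum d n x - etaSum d n y)) • (EuclideanSpace.single jD (1 : ℝ)) := by
    ext j
    have h1 : (f x - f y) j = f x j - f y j := rfl
    have h2 : ((x - y) + (ε * (etaSum d n x - etaSum d n y)) • (EuclideanSpace.single jD (1 : ℝ))) j
        = (x j - y j) + (ε * (etaSum d n x - etaSum d n y)) * (EuclideanSpace.single jD (1:ℝ)) j := rfl
    rw [h1, h2, hf, hf, EuclideanSpace.single_apply]
    by_cases h : (j : ℕ) = d - 1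
    · have : j = jD := by apply Fin.ext; simpa using h
      simp [h, this, hjD]; ring
    · have : ¬ (j = jD) := by
        intro hc; apply h; rw [hc]
      simp [h, this]
  calc ‖f x - f y‖ = ‖(x - y) + (ε * (etaSum d n x - etaSum d n y)) • (EuclideanSpace.single jD (1 : ℝ))‖ := by rw [key]
    _ ≤ ‖x - y‖ + ‖(ε * (etaSum d n x - etaSum d n y)) • (EuclideanSpace.single jD (1 : ℝ))‖ :=
        norm_add_le _ _
    _ = ‖x - y‖ + |ε| * |etaSum d n x - etaSum d n y| := by
        rw [norm_smul, EuclideanSpace.norm_single]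
        simp [Real.norm_eq_abs, abs_mul]
    _ ≤ ‖x - y‖ + 1 * ((1 / ((n : ℝ) - 1)) * ‖x - y‖) := by
        have := etaSum_diff_le (x := x) (y := y) (d := d) hn
        have habs : |etaSum d n x - etaSum d n y| ≥ 0 := abs_nonneg _
        gcongr
    _ ≤ ((n : ℝ) / ((n : ℝ) - 1)) * ‖x - y‖ := by
        rw [one_mul]
        have : (n : ℝ) / ((n : ℝ) - 1) = 1 + 1 / ((n : ℝ) - 1) := by field_simp; ring
        rw [this, add_mul, one_mul]

/-- The digit-reversing involution of `Fin d` fixing the last index. -/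
def revPerm (d : ℕ) : Fin d → Fin d := fun j =>
  if (j : ℕ) = d - 1 then j else ⟨d - 2 - (j : ℕ), by have := j.isLt; omega⟩

lemma revPerm_involutive (d : ℕ) : Function.Involutive (revPerm d) := by
  intro j
  unfold revPerm
  by_cases h : (j : ℕ) = d - 1
  · simp [h]
  · have hj := j.isLt
    simp only [h, if_false]
    have h2 : ¬ (d - 2 - (j : ℕ) = d - 1) := by omega
    simp only [h2, if_false]
    apply Fin.ext
    simp
    omega

/-- The index of a grid point under the coupling layer's last coordinate. -/
def etaIndex (d n : ℕ) (α : Fin d → Fin n) : Fin (n ^ d) :=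
  finFunctionFinEquiv (fun j => α (revPerm d j))

lemma grid_val {d n : ℕ} (hd : 2 ≤ d) (hn : 2 ≤ n) (α : Fin d → Fin n) :
    gridPoint d n α ⟨d - 1, by omega⟩ + etaSum d n (gridPoint d n α)
      = ((∑ j : Fin d, ((α (revPerm d j)) : ℕ) * n ^ (j : ℕ) : ℕ) : ℝ) / ((n : ℝ) ^ d) := by
  have hn0 : (n : ℝ) ≠ 0 := by positivity
  have hre : (∑ j : Fin d, ((α (revPerm d j)) : ℕ) * n ^ (j : ℕ))
      = ∑ j : Fin d, ((α j : ℕ)) * n ^ ((revPerm d j : ℕ)) := by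
    have := Equiv.sum_comp ((revPerm_involutive d).toPerm)
      (fun j => ((α j : ℕ)) * n ^ ((revPerm d j : ℕ)))
    rw [← this]
    apply Finset.sum_congr rfl
    intro j _
    simp [Function.Involutive.coe_toPerm, revPerm_involutive d j]
  rw [hre]
  push_cast
  rw [Finset.sum_div]
  set jD : Fin d := ⟨d - 1, by omega⟩ with hjD
  have hL1 : gridPoint d n α jD = ∑ j : Fin d, (if j = jD then ((α j : ℝ)) / n else 0) := by
    rw [Finset.sum_ite_eq' Finset.univ jD (fun j => ((α j : ℝ)) / n)]
    simp [gridPoint]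
  rw [hL1]
  unfold etaSum
  rw [← Finset.sum_add_distrib]
  apply Finset.sum_congr rfl
  intro j _
  have hjlt := j.isLt
  by_cases h : (j : ℕ) = d - 1
  · have hj : j = jD := by apply Fin.ext; simpa using h
    have hnlt : ¬ ((j : ℕ) < d - 1) := by omega
    have hπ : ((revPerm d j : ℕ)) = d - 1 := by
      unfold revPerm; simp [h]
    rw [if_pos hj, if_neg hnlt, hπ, add_zero]
    have hpow : (n : ℝ) ^ d = (n : ℝ) ^ (d - 1) * n := by
      rw [← pow_succ]; congr 1; omega
    rw [hpow]
    field_simp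
  · have hjne : ¬ (j = jD) := fun hc => h (by rw [hc])
    have hlt : (j : ℕ) < d - 1 := by omega
    have hπ : ((revPerm d j : ℕ)) = d - 2 - (j : ℕ) := by
      unfold revPerm; simp [h]
    rw [if_neg hjne, if_pos hlt, hπ, zero_add]
    have hmax : max 0 (gridPoint d n α j) = ((α j : ℝ)) / n := by
      apply max_eq_right
      unfold gridPoint
      positivity
    rw [hmax]
    rw [show -((j : ℕ) : ℤ) - 1 = -(((j : ℕ) + 1 : ℕ) : ℤ) by push_cast; ring,
      zpow_neg, zpow_natCast]
    have hpow : (n : ℝ) ^ d = (n : ℝ) ^ (d - 2 - (j : ℕ)) * (n : ℝ) ^ ((j : ℕ) + 1) * n := by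
      rw [← pow_add, ← pow_succ]; congr 1; omega
    rw [hpow]
    have h1 : (n : ℝ) ^ ((j : ℕ) + 1) ≠ 0 := by positivity
    have h2 : (n : ℝ) ^ (d - 2 - (j : ℕ)) ≠ 0 := by positivity
    field_simp

lemma etaIndex_injective (d n : ℕ) : Function.Injective (etaIndex d n) := by
  intro a b hab
  have h2 : (fun j => a (revPerm d j)) = (fun j => b (revPerm d j)) :=
    finFunctionFinEquiv.injective hab
  funext j
  have := congrFun h2 (revPerm d j)
  simpa [revPerm_involutive d j] using this

lemma etaIndex_surjective (d n : ℕ) : Function.Surjective (etaIndex d n) := by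
  intro i
  refine ⟨fun j => (finFunctionFinEquiv.symm i) (revPerm d j), ?_⟩
  unfold etaIndex
  have : (fun j => (finFunctionFinEquiv.symm i) (revPerm d (revPerm d j)))
      = finFunctionFinEquiv.symm i := by
    funext j; rw [revPerm_involutive d j]
  rw [this, Equiv.apply_symm_apply]

/-- Lemma 2.3 of the paper: the coupling layer
`η(x)_j = x_j` for `j < d`, `η(x)_d = x_d + ∑_{j=1}^{d−1} n^{−j} σ(x_j)` (with `σ = ReLU`)
is a bijection with explicit inverse, `η` and `η^{−1}` are `n/(n−1)`-Lipschitz, and the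
last coordinates of the perturbed grid points are exactly `{i/N : i < N}`, hence pairwise
distinct with minimal pairwise distance exactly `N^{−1}`. -/
theorem eta_perturbation (d n : ℕ) (hd : 2 ≤ d) (hn : 2 ≤ n) (N : ℕ) (hN : N = n ^ d)
    (η : EuclideanSpace ℝ (Fin d) → EuclideanSpace ℝ (Fin d))
    (hη : ∀ x : EuclideanSpace ℝ (Fin d), ∀ j : Fin d,
      η x j = if (j : ℕ) = d - 1
        then x j + ∑ k : Fin d, (if (k : ℕ) < d - 1
          then (n : ℝ) ^ (-((k : ℕ) : ℤ) - 1) * max 0 (x k) else 0)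
        else x j) :
    (Function.Bijective η ∧
      ∃ ηinv : EuclideanSpace ℝ (Fin d) → EuclideanSpace ℝ (Fin d),
        Function.LeftInverse ηinv η ∧ Function.RightInverse ηinv η ∧
        (∀ y : EuclideanSpace ℝ (Fin d), ∀ j : Fin d,
          ηinv y j = if (j : ℕ) = d - 1
            then y j - ∑ k : Fin d, (if (k : ℕ) < d - 1
              then (n : ℝ) ^ (-((k : ℕ) : ℤ) - 1) * max 0 (y k) else 0)
            else y j) ∧
        LipschitzWith (Real.toNNReal ((n : ℝ) / ((n : ℝ) - 1))) η ∧
        LipschitzWith (Real.toNNReal ((n : ℝ) / ((n : ℝ) - 1))) ηinv) ∧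
    ((Set.range fun α : Fin d → Fin n => η (gridPoint d n α) ⟨d - 1, by omega⟩) =
        {x : ℝ | ∃ i : ℕ, i < N ∧ x = (i : ℝ) / N} ∧
      (Function.Injective fun α : Fin d → Fin n => η (gridPoint d n α) ⟨d - 1, by omega⟩) ∧
      (∀ α β : Fin d → Fin n, α ≠ β →
        1 / (N : ℝ) ≤ |η (gridPoint d n α) ⟨d - 1, by omega⟩ -
          η (gridPoint d n β) ⟨d - 1, by omega⟩|) ∧
      ∃ α β : Fin d → Fin n, α ≠ β ∧
        |η (gridPoint d n α) ⟨d - 1, by omega⟩ -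
          η (gridPoint d n β) ⟨d - 1, by omega⟩| = 1 / (N : ℝ)) := by
  have hη' : ∀ x : EuclideanSpace ℝ (Fin d), ∀ j : Fin d,
      η x j = if (j : ℕ) = d - 1 then x j + etaSum d n x else x j := by
    intro x j; rw [hη x j]; rfl
  -- the explicit inverse
  set F : EuclideanSpace ℝ (Fin d) → EuclideanSpace ℝ (Fin d) :=
    fun y => WithLp.toLp 2 (fun j : Fin d => if (j : ℕ) = d - 1 then y j - etaSum d n y else y j) with hFdef
  have hF : ∀ y : EuclideanSpace ℝ (Fin d), ∀ j : Fin d,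
      F y j = if (j : ℕ) = d - 1 then y j - etaSum d n y else y j := fun y j => rfl
  have hSη : ∀ x, etaSum d n (η x) = etaSum d n x := by
    intro x
    unfold etaSum
    apply Finset.sum_congr rfl
    intro k _
    by_cases h : (k : ℕ) < d - 1
    · rw [if_pos h, if_pos h, hη' x k, if_neg (by omega)]
    · rw [if_neg h, if_neg h]
  have hSF : ∀ y, etaSum d n (F y) = etaSum d n y := by
    intro y
    unfold etaSum
    apply Finset.sum_congr rfl
    intro k _
    by_cases h : (k : ℕ) < d - 1
    · rw [if_pos h, if_pos h, hF y k, if_neg (by omega)]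
    · rw [if_neg h, if_neg h]
  have hLI : Function.LeftInverse F η := by
    intro x
    ext j
    rw [hF, hSη]
    by_cases h : (j : ℕ) = d - 1
    · rw [if_pos h, hη' x j, if_pos h]; ring
    · rw [if_neg h, hη' x j, if_neg h]
  have hRI : Function.RightInverse F η := by
    intro y
    ext j
    rw [hη' (F y) j, hSF]
    by_cases h : (j : ℕ) = d - 1
    · rw [if_pos h, hF y j, if_pos h]; ring
    · rw [if_neg h, hF y j, if_neg h]
  have hbij : Function.Bijective η := ⟨hLI.injective, hRI.surjective⟩
  have hlip1 : LipschitzWith (Real.toNNReal ((n : ℝ) / ((n : ℝ) - 1))) η := by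
    apply coupling_lip hd hn 1 (by norm_num)
    intro x j
    rw [hη' x j]
    by_cases h : (j : ℕ) = d - 1 <;> simp [h]
  have hlip2 : LipschitzWith (Real.toNNReal ((n : ℝ) / ((n : ℝ) - 1))) F := by
    apply coupling_lip hd hn (-1) (by norm_num)
    intro y j
    rw [hF y j]
    by_cases h : (j : ℕ) = d - 1 <;> simp [h] <;> ring
  -- the grid values
  have hN0 : (0:ℝ) < (N : ℝ) := by
    rw [hN]; push_cast; positivity
  have hval : ∀ α : Fin d → Fin n,
      η (gridPoint d n α) (⟨d - 1, by omega⟩ : Fin d) = ((etaIndex d n α : ℕ) : ℝ) / (N : ℝ) := by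
    intro α
    rw [hη' (gridPoint d n α) ⟨d - 1, by omega⟩, if_pos rfl, grid_val hd hn α]
    have h1 : (etaIndex d n α : ℕ) = ∑ j : Fin d, ((α (revPerm d j)) : ℕ) * n ^ (j : ℕ) :=
      finFunctionFinEquiv_apply _
    rw [h1, hN]
    push_cast
    ring
  have hinj : Function.Injective fun α : Fin d → Fin n =>
      η (gridPoint d n α) (⟨d - 1, by omega⟩ : Fin d) := by
    intro a b hab
    simp only [hval] at hab
    have h2 : (etaIndex d n a : ℕ) = (etaIndex d n b : ℕ) := by
      field_simp at hab
      exact_mod_cast hab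
    exact etaIndex_injective d n (Fin.ext h2)
  refine ⟨⟨hbij, F, hLI, hRI, hF, hlip1, hlip2⟩, ?_, hinj, ?_, ?_⟩
  · -- range
    ext x
    simp only [Set.mem_range, Set.mem_setOf_eq]
    constructor
    · rintro ⟨α, rfl⟩
      exact ⟨(etaIndex d n α : ℕ), by rw [hN]; exact (etaIndex d n α).isLt, hval α⟩
    · rintro ⟨i, hiN, rfl⟩
      obtain ⟨α, hα⟩ := etaIndex_surjective d n ⟨i, by omega⟩
      refine ⟨α, ?_⟩
      rw [hval α, hα]
  · -- separation
    intro a b hab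
    rw [hval a, hval b, div_sub_div_same, abs_div, abs_of_pos hN0]
    have hne : (etaIndex d n a : ℕ) ≠ (etaIndex d n b : ℕ) := by
      intro h
      exact hab (etaIndex_injective d n (Fin.ext h))
    have h1 : (1:ℝ) ≤ |((etaIndex d n a : ℕ) : ℝ) - ((etaIndex d n b : ℕ) : ℝ)| := by
      have h2 : ((etaIndex d n a : ℕ) : ℤ) - ((etaIndex d n b : ℕ) : ℤ) ≠ 0 := by
        intro h; apply hne; omega
      have h3 := Int.one_le_abs h2
      calc (1:ℝ) = ((1:ℤ) : ℝ) := by norm_num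
        _ ≤ ((|((etaIndex d n a : ℕ) : ℤ) - ((etaIndex d n b : ℕ) : ℤ)| : ℤ) : ℝ) := by
            exact_mod_cast h3
        _ = |((etaIndex d n a : ℕ) : ℝ) - ((etaIndex d n b : ℕ) : ℝ)| := by
            push_cast; ring_nf
    gcongr
  · -- existence of minimal distance pair
    have hN1 : 1 < N := by
      rw [hN]
      calc 1 < 2 ^ 2 := by norm_num
        _ ≤ 2 ^ d := Nat.pow_le_pow_right (by norm_num) hd
        _ ≤ n ^ d := Nat.pow_le_pow_left hn d
    obtain ⟨α, hα⟩ := etaIndex_surjective d n ⟨0, by omega⟩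
    obtain ⟨β, hβ⟩ := etaIndex_surjective d n ⟨1, by omega⟩
    refine ⟨α, β, ?_, ?_⟩
    · intro h
      rw [h, hβ] at hα
      have : (1 : ℕ) = 0 := congrArg Fin.val hα
      omega
    · rw [hval α, hval β, hα, hβ]
      show |((0:ℕ):ℝ)/(N:ℝ) - ((1:ℕ):ℝ)/(N:ℝ)| = 1/(N:ℝ)
      push_cast
      rw [zero_div, zero_sub, abs_neg, abs_of_pos (div_pos one_pos hN0)]
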